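/- Let 𝒜 be a unital associative K-algebra, T ∈ Mₙ(𝒜) an invertible matrix satisfying the FRT relations, and A ∈ Mₙ(K) a scalar matrix (regarded in Mₙ(𝒜)). Then the quantum trace is invariant under conjugation by T: Tr(D·T⁻¹·A·T) = Tr(D·A)·1_𝒜 in 𝒜. -/

import Mathlib

open Matrix Kronecker

/-- The Hecke matrix `S = q·Σᵢ E_{ii}⊗E_{ii} + Σ_{i≠j} E_{ij}⊗E_{ji} + (q−q⁻¹)·Σ_{i<j} E_{ii}⊗E_{jj}`. -/
noncomputable def heckeS (K : Type*) [Field K] (n : ℕ) (q : K) :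
    Matrix (Fin n × Fin n) (Fin n × Fin n) K :=
  q • (∑ i : Fin n, Matrix.single i i (1 : K) ⊗ₖ Matrix.single i i (1 : K))
    + ∑ i : Fin n, ∑ j : Fin n,
        (if i ≠ j then Matrix.single i j (1 : K) ⊗ₖ Matrix.single j i (1 : K) else 0)
    + (q - q⁻¹) • ∑ i : Fin n, ∑ j : Fin n,
        (if i < j then Matrix.single i i (1 : K) ⊗ₖ Matrix.single j j (1 : K) else 0)

/-- The diagonal matrix `D = Σᵢ q^{−2i+2}·E_{ii}` defining the quantum trace
`Tr_q(M) = Tr(D·M)`. -/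
noncomputable def qTraceD (K : Type*) [Field K] (n : ℕ) (q : K) : Matrix (Fin n) (Fin n) K :=
  Matrix.diagonal fun i : Fin n => q ^ (-(2 * (i : ℕ) : ℤ))

/-- The quantum-trace weights. -/
noncomputable def qd {K : Type*} [Field K] {n : ℕ} (q : K) (i : Fin n) : K :=
  q ^ (-(2 * (i : ℕ) : ℤ))

lemma sum_if_lt {M : Type*} [AddCommMonoid M] {n : ℕ} (a : Fin n) (g : ℕ → M) :
    ∑ k : Fin n, (if k < a then g k else 0) = ∑ j ∈ Finset.range a.val, g j := by
  have h1 : ∀ k : Fin n, (if k < a then g k else 0)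
      = (fun j => if j < a.val then g j else 0) (k : ℕ) := by
    intro k; simp only [Fin.lt_def]
  calc ∑ k : Fin n, (if k < a then g k else 0)
      = ∑ k : Fin n, (fun j => if j < a.val then g j else 0) (k : ℕ) :=
        Finset.sum_congr rfl fun k _ => h1 k
    _ = ∑ j ∈ Finset.range n, (if j < a.val then g j else 0) :=
        Fin.sum_univ_eq_sum_range (fun j => if j < (a : ℕ) then g j else 0) n
    _ = ∑ j ∈ Finset.range a.val, (if j < a.val then g j else 0) := by
        rw [Finset.sum_subset (Finset.range_subset_range.2 a.isLt.le)]
        intro x hx hxa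
        simp only [Finset.mem_range] at hx hxa
        simp [hxa]
    _ = ∑ j ∈ Finset.range a.val, g j := by
        apply Finset.sum_congr rfl
        intro j hj
        simp [Finset.mem_range.1 hj]

lemma geomNat {K : Type*} [Field K] (q : K) (hq : q ≠ 0) (m : ℕ) :
    q * q ^ (-(2 * m : ℤ)) + (q - q⁻¹) * ∑ j ∈ Finset.range m, q ^ (-(2 * j : ℤ)) = q := by
  induction m with
  | zero => simp
  | succ m ih =>
    rw [Finset.sum_range_succ, mul_add]
    push_cast
    have hpow : q ^ (-(2 * (m + 1) : ℤ)) = q ^ (-(2 * m : ℤ)) * (q⁻¹ * q⁻¹) := by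
      have : (-(2 * (m + 1) : ℤ)) = (-(2 * m : ℤ)) + (-1) + (-1) := by push_cast; ring
      rw [this, zpow_add₀ hq, zpow_add₀ hq, _root_.zpow_neg_one, mul_assoc]
    rw [hpow]
    have hinv : q * q⁻¹ = 1 := mul_inv_cancel₀ hq
    linear_combination ih + q ^ (-(2 * (m:ℤ))) * q⁻¹ * hinv

lemma geomFin {K : Type*} [Field K] {n : ℕ} (q : K) (hq : q ≠ 0) (a : Fin n) :
    q * q ^ (-(2 * (a : ℕ) : ℤ))
      + (q - q⁻¹) * ∑ k : Fin n, (if k < a then q ^ (-(2 * (k : ℕ) : ℤ)) else 0) = q := by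
  rw [sum_if_lt a (fun j => q ^ (-(2 * j : ℤ)))]
  exact geomNat q hq a.val

section Helpers

variable {K : Type*} [Field K] {n : ℕ} {B : Type*} [Ring B] [Algebra K B]

lemma sumA (i j k l : Fin n) :
    (∑ m : Fin n, Matrix.single m m (1 : K) ⊗ₖ Matrix.single m m (1 : K)) (i, j) (k, l)
      = if i = j ∧ k = i ∧ l = j then 1 else 0 := by
  rw [Matrix.sum_apply]
  simp only [kroneckerMap_apply, Matrix.single, of_apply]
  rw [Finset.sum_eq_single i]
  · by_cases h1 : i = j <;> by_cases h2 : k = i <;> by_cases h3 : l = j <;>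
      simp_all <;> aesop
  · intro b _ hb; by_cases h : b = i <;> simp_all
  · simp

lemma sumB (i j k l : Fin n) :
    (∑ a : Fin n, ∑ b : Fin n,
        (if a ≠ b then Matrix.single a b (1 : K) ⊗ₖ Matrix.single b a (1 : K) else 0))
        (i, j) (k, l)
      = if i ≠ j ∧ k = j ∧ l = i then 1 else 0 := by
  simp only [Matrix.sum_apply, ite_apply, Matrix.zero_apply,
    kroneckerMap_apply, Matrix.single, of_apply]
  rw [Finset.sum_eq_single i]
  · rw [Finset.sum_eq_single j]
    · by_cases h1 : i = j <;> by_cases h2 : k = j <;> by_cases h3 : l = i <;>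
        simp_all <;> aesop
    · intro b _ hb; by_cases h : i = b <;> simp_all [Ne.symm hb]
    · simp
  · intro a _ ha
    rw [Finset.sum_eq_single j]
    · by_cases h : a = j <;> simp_all [Ne.symm ha]
    · intro b _ hb; by_cases h : a = b <;> simp_all [Ne.symm ha, Ne.symm hb]
    · simp
  · simp

lemma sumC (i j k l : Fin n) :
    (∑ a : Fin n, ∑ b : Fin n,
        (if a < b then Matrix.single a a (1 : K) ⊗ₖ Matrix.single b b (1 : K) else 0))
        (i, j) (k, l)
      = if i < j ∧ k = i ∧ l = j then 1 else 0 := by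
  simp only [Matrix.sum_apply, ite_apply, Matrix.zero_apply,
    kroneckerMap_apply, Matrix.single, of_apply]
  rw [Finset.sum_eq_single i]
  · rw [Finset.sum_eq_single j]
    · by_cases h1 : i < j <;> by_cases h2 : k = i <;> by_cases h3 : l = j <;>
        simp_all <;> aesop
    · intro b _ hb
      by_cases h : i < b
      · simp_all
      · simp [h]
    · simp
  · intro a _ ha
    rw [Finset.sum_eq_single j]
    · by_cases h : a < j
      · simp_all
      · simp [h]
    · intro b _ hb
      by_cases h : a < b
      · simp_all
      · simp [h]
    · simp
  · simp

lemma heckeS_apply (q : K) (i j k l : Fin n) :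
    heckeS K n q (i, j) (k, l) =
      (if i = j ∧ k = i ∧ l = j then q else 0)
      + (if i ≠ j ∧ k = j ∧ l = i then 1 else 0)
      + (if i < j ∧ k = i ∧ l = j then q - q⁻¹ else 0) := by
  simp only [heckeS, Matrix.add_apply, Matrix.smul_apply, sumA, sumB, sumC, smul_eq_mul,
    mul_ite, mul_one, mul_zero]

lemma kron_one_mul_kron_one (A C : Matrix (Fin n) (Fin n) B) :
    (A ⊗ₖ (1 : Matrix (Fin n) (Fin n) B)) * (C ⊗ₖ (1 : Matrix (Fin n) (Fin n) B))
      = (A * C) ⊗ₖ (1 : Matrix (Fin n) (Fin n) B) := by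
  ext ⟨i, j⟩ ⟨k, l⟩
  simp [Matrix.mul_apply, Matrix.kroneckerMap_apply, Matrix.one_apply, Fintype.sum_prod_type,
    ite_mul, mul_ite, Finset.mul_sum]

lemma one_kron_mul_one_kron (A C : Matrix (Fin n) (Fin n) B) :
    ((1 : Matrix (Fin n) (Fin n) B) ⊗ₖ A) * ((1 : Matrix (Fin n) (Fin n) B) ⊗ₖ C)
      = (1 : Matrix (Fin n) (Fin n) B) ⊗ₖ (A * C) := by
  ext ⟨i, j⟩ ⟨k, l⟩
  simp [Matrix.mul_apply, Matrix.kroneckerMap_apply, Matrix.one_apply, Fintype.sum_prod_type,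
    ite_mul, mul_ite, Finset.mul_sum]

lemma expandL (Sm : Matrix (Fin n × Fin n) (Fin n × Fin n) B)
    (T Tinv : Matrix (Fin n) (Fin n) B) (a b i : Fin n) :
    ((Tinv ⊗ₖ (1 : Matrix (Fin n) (Fin n) B)) * Sm * (T ⊗ₖ (1 : Matrix (Fin n) (Fin n) B)))
      (i, a) (i, b)
    = ∑ k : Fin n, ∑ l : Fin n, Tinv i k * (Sm (k, a) (l, b) * T l i) := by
  simp only [Matrix.mul_apply, Fintype.sum_prod_type, kroneckerMap_apply, Matrix.one_apply,
    ite_mul, mul_ite, one_mul, mul_one, zero_mul, mul_zero, Finset.sum_ite_eq,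
    Finset.sum_ite_eq', Finset.mem_univ, if_true, Finset.sum_mul, Finset.mul_sum, mul_assoc]
  rw [Finset.sum_comm]

lemma expandR (Sm : Matrix (Fin n × Fin n) (Fin n × Fin n) B)
    (T Tinv : Matrix (Fin n) (Fin n) B) (a b i : Fin n) :
    (((1 : Matrix (Fin n) (Fin n) B) ⊗ₖ T) * Sm * ((1 : Matrix (Fin n) (Fin n) B) ⊗ₖ Tinv))
      (i, a) (i, b)
    = ∑ k : Fin n, ∑ l : Fin n, T a k * (Sm (i, k) (i, l) * Tinv l b) := by
  simp only [Matrix.mul_apply, Fintype.sum_prod_type, kroneckerMap_apply, Matrix.one_apply,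
    ite_mul, mul_ite, one_mul, mul_one, zero_mul, mul_zero, Finset.sum_ite_irrel,
    Finset.sum_const_zero, Finset.sum_ite_eq, Finset.sum_ite_eq', Finset.mem_univ, if_true,
    Finset.sum_mul, Finset.mul_sum, mul_assoc]
  rw [Finset.sum_comm]

lemma innerL (q : K) (T Tinv : Matrix (Fin n) (Fin n) B) (a b i : Fin n) :
    ∑ k : Fin n, ∑ l : Fin n,
        Tinv i k * ((algebraMap K B) (heckeS K n q (k, a) (l, b)) * T l i)
      = if b = a then
          q • (Tinv i a * T a i)
            + (q - q⁻¹) • ∑ k : Fin n, (if k < a then Tinv i k * T k i else 0)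
        else Tinv i b * T a i := by
  rcases eq_or_ne b a with rfl | hba
  · simp only [heckeS_apply, if_pos rfl, and_true, eq_self_iff_true, map_add, apply_ite (algebraMap K B), map_zero,
      _root_.map_one, mul_add, add_mul, mul_ite, ite_mul, mul_zero, zero_mul, mul_one, one_mul,
      Finset.sum_add_distrib, ite_and, Finset.sum_ite_irrel, Finset.sum_const_zero,
      Finset.sum_ite_eq, Finset.sum_ite_eq', Finset.mem_univ, if_true, ← Algebra.smul_def,
      smul_mul_assoc, mul_smul_comm, Finset.smul_sum, smul_ite, smul_zero]
    have h0 : (∑ x : Fin n, if x ≠ b then if b = x then Tinv i x * T b i else 0 else 0) = 0 := by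
      apply Finset.sum_eq_zero
      intro x _
      rcases eq_or_ne x b with rfl | h
      · simp
      · simp [h, Ne.symm h]
    rw [h0, add_zero]
  · simp only [heckeS_apply, hba, map_add, apply_ite (algebraMap K B), map_zero, _root_.map_one, mul_add, add_mul,
      mul_ite, ite_mul, mul_zero, zero_mul, mul_one, one_mul, Finset.sum_add_distrib, ite_and,
      Finset.sum_ite_irrel, Finset.sum_const_zero, Finset.sum_ite_eq, Finset.sum_ite_eq',
      Finset.mem_univ, if_true, ← Algebra.smul_def, smul_mul_assoc, mul_smul_comm,
      Finset.smul_sum, smul_ite, smul_zero]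
    rw [Finset.sum_eq_single b]
    · simp [hba]
    · intro x _ hx
      by_cases hxa : x = a
      · simp [hxa]
      · simp [hxa, Ne.symm hx]
    · simp

lemma innerR (q : K) (T Tinv : Matrix (Fin n) (Fin n) B) (a b i : Fin n) :
    ∑ k : Fin n, ∑ l : Fin n,
        T a k * ((algebraMap K B) (heckeS K n q (i, k) (i, l)) * Tinv l b)
      = q • (T a i * Tinv i b)
          + ∑ k : Fin n, (if i < k then (q - q⁻¹) • (T a k * Tinv k b) else 0) := by
  simp only [heckeS_apply, map_add, apply_ite (algebraMap K B), map_zero, _root_.map_one, mul_add, add_mul,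
    mul_ite, ite_mul, mul_zero, zero_mul, mul_one, one_mul, Finset.sum_add_distrib, ite_and,
    Finset.sum_ite_irrel, Finset.sum_const_zero, Finset.sum_ite_eq, Finset.sum_ite_eq',
    Finset.mem_univ, if_true, ← Algebra.smul_def, smul_mul_assoc, mul_smul_comm,
    Finset.smul_sum, smul_ite, smul_zero]
  have : (∑ x : Fin n, if i = x then (0:B) else if i = x then T a x * Tinv i b else 0) = 0 := by
    apply Finset.sum_eq_zero
    intro x _
    split_ifs <;> rfl
  simp [this]

lemma weightedL (q : K) (T Tinv : Matrix (Fin n) (Fin n) B) (a b : Fin n) :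
    ∑ i : Fin n, qd q i •
        (((Tinv ⊗ₖ (1 : Matrix (Fin n) (Fin n) B)) * (heckeS K n q).map (algebraMap K B)
            * (T ⊗ₖ (1 : Matrix (Fin n) (Fin n) B))) (i, a) (i, b))
      = if b = a then
          q • (∑ i : Fin n, qd q i • (Tinv i a * T a i))
            + (q - q⁻¹) • ∑ k : Fin n,
                (if k < a then ∑ i : Fin n, qd q i • (Tinv i k * T k i) else 0)
        else ∑ i : Fin n, qd q i • (Tinv i b * T a i) := by
  have e : ∀ i : Fin n,
      (((Tinv ⊗ₖ (1 : Matrix (Fin n) (Fin n) B)) * (heckeS K n q).map (algebraMap K B)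
          * (T ⊗ₖ (1 : Matrix (Fin n) (Fin n) B))) (i, a) (i, b))
        = if b = a then
            q • (Tinv i a * T a i)
              + (q - q⁻¹) • ∑ k : Fin n, (if k < a then Tinv i k * T k i else 0)
          else Tinv i b * T a i := by
    intro i
    rw [expandL]
    simp only [Matrix.map_apply]
    exact innerL q T Tinv a b i
  rcases eq_or_ne b a with rfl | hba
  · rw [if_pos rfl, Finset.sum_congr rfl fun i _ => by rw [e i, if_pos rfl]]
    simp only [smul_add, smul_smul, Finset.sum_add_distrib, Finset.smul_sum, smul_ite, smul_zero]
    congr 1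
    · apply Finset.sum_congr rfl
      intro i _
      rw [mul_comm]
    · rw [Finset.sum_comm]
      apply Finset.sum_congr rfl
      intro k _
      split_ifs with hk
      · apply Finset.sum_congr rfl
        intro i _
        rw [mul_comm]
      · simp
  · rw [if_neg hba, Finset.sum_congr rfl fun i _ => by rw [e i, if_neg hba]]

/-- Right side weighted sum. -/
lemma weightedR (q : K) (hq : q ≠ 0) (T Tinv : Matrix (Fin n) (Fin n) B)
    (hT : T * Tinv = 1) (a b : Fin n) :
    ∑ i : Fin n, qd q i •
        ((((1 : Matrix (Fin n) (Fin n) B) ⊗ₖ T) * (heckeS K n q).map (algebraMap K B)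
            * ((1 : Matrix (Fin n) (Fin n) B) ⊗ₖ Tinv)) (i, a) (i, b))
      = if a = b then q • (1 : B) else 0 := by
  have e : ∀ i : Fin n,
      ((((1 : Matrix (Fin n) (Fin n) B) ⊗ₖ T) * (heckeS K n q).map (algebraMap K B)
          * ((1 : Matrix (Fin n) (Fin n) B) ⊗ₖ Tinv)) (i, a) (i, b))
        = q • (T a i * Tinv i b)
            + ∑ k : Fin n, (if i < k then (q - q⁻¹) • (T a k * Tinv k b) else 0) := by
    intro i
    rw [expandR]
    simp only [Matrix.map_apply]
    exact innerR q T Tinv a b i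
  rw [Finset.sum_congr rfl fun i _ => by rw [e i]]
  have step : ∀ k : Fin n,
      (qd q k * q) • (T a k * Tinv k b)
        + ∑ i : Fin n, (if i < k then (qd q i * (q - q⁻¹)) • (T a k * Tinv k b) else 0)
      = q • (T a k * Tinv k b) := by
    intro k
    have hsum : ∑ i : Fin n, (if i < k then (qd q i * (q - q⁻¹)) • (T a k * Tinv k b) else 0)
        = ((q - q⁻¹) * ∑ i : Fin n, (if i < k then qd q i else 0)) • (T a k * Tinv k b) := by
      conv_rhs => rw [Finset.mul_sum, Finset.sum_smul]
      apply Finset.sum_congr rfl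
      intro i _
      split_ifs with h
      · rw [mul_comm]
      · simp
    rw [hsum, ← add_smul]
    congr 1
    have := geomFin q hq k
    simpa [qd, mul_comm] using this
  calc
    ∑ i : Fin n, qd q i • (q • (T a i * Tinv i b)
        + ∑ k : Fin n, (if i < k then (q - q⁻¹) • (T a k * Tinv k b) else 0))
      = ∑ k : Fin n, ((qd q k * q) • (T a k * Tinv k b)
          + ∑ i : Fin n, (if i < k then (qd q i * (q - q⁻¹)) • (T a k * Tinv k b) else 0)) := by
        simp only [smul_add, smul_smul, Finset.sum_add_distrib, Finset.smul_sum, smul_ite,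
          smul_zero]
        congr 1
        rw [Finset.sum_comm]
    _ = ∑ k : Fin n, q • (T a k * Tinv k b) := Finset.sum_congr rfl fun k _ => step k
    _ = q • ((T * Tinv) a b) := by
        rw [Matrix.mul_apply, Finset.smul_sum]
    _ = if a = b then q • (1 : B) else 0 := by
        rw [hT, Matrix.one_apply]
        split_ifs <;> simp

end Helpers

/-- For an invertible FRT matrix `T` over a `K`-algebra and a scalar matrix `A ∈ Mₙ(K)`,
the quantum trace is invariant under conjugation: `Tr_q(T⁻¹·A·T) = Tr_q(A)`. -/
theorem qTrace_conjugation_invariant (K : Type*) [Field K] (n : ℕ) (q : K) (hq : q ≠ 0)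
    (B : Type*) [Ring B] [Algebra K B]
    (T Tinv : Matrix (Fin n) (Fin n) B)
    (hT : T * Tinv = 1) (hT' : Tinv * T = 1)
    (hFRT : (heckeS K n q).map (algebraMap K B)
              * ((T ⊗ₖ (1 : Matrix (Fin n) (Fin n) B))
                  * ((1 : Matrix (Fin n) (Fin n) B) ⊗ₖ T))
          = ((T ⊗ₖ (1 : Matrix (Fin n) (Fin n) B))
              * ((1 : Matrix (Fin n) (Fin n) B) ⊗ₖ T))
              * (heckeS K n q).map (algebraMap K B))
    (A : Matrix (Fin n) (Fin n) K) :
    Matrix.trace ((qTraceD K n q).map (algebraMap K B)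
        * (Tinv * A.map (algebraMap K B) * T))
      = algebraMap K B (Matrix.trace (qTraceD K n q * A)) := by
  set Sm := (heckeS K n q).map (algebraMap K B) with hSmDef
  have e1 : ((1 : Matrix (Fin n) (Fin n) B) ⊗ₖ T) * ((1 : Matrix (Fin n) (Fin n) B) ⊗ₖ Tinv)
      = 1 := by rw [one_kron_mul_one_kron, hT, Matrix.one_kronecker_one]
  have e2 : (Tinv ⊗ₖ (1 : Matrix (Fin n) (Fin n) B)) * (T ⊗ₖ (1 : Matrix (Fin n) (Fin n) B))
      = 1 := by rw [kron_one_mul_kron_one, hT', Matrix.one_kronecker_one]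
  have hKey : (Tinv ⊗ₖ (1 : Matrix (Fin n) (Fin n) B)) * Sm
        * (T ⊗ₖ (1 : Matrix (Fin n) (Fin n) B))
      = ((1 : Matrix (Fin n) (Fin n) B) ⊗ₖ T) * Sm
        * ((1 : Matrix (Fin n) (Fin n) B) ⊗ₖ Tinv) := by
    have h1 : (Tinv ⊗ₖ (1 : Matrix (Fin n) (Fin n) B))
          * (Sm * ((T ⊗ₖ (1 : Matrix (Fin n) (Fin n) B))
              * ((1 : Matrix (Fin n) (Fin n) B) ⊗ₖ T)))
          * ((1 : Matrix (Fin n) (Fin n) B) ⊗ₖ Tinv)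
        = (Tinv ⊗ₖ (1 : Matrix (Fin n) (Fin n) B)) * Sm
            * (T ⊗ₖ (1 : Matrix (Fin n) (Fin n) B)) := by
      calc (Tinv ⊗ₖ (1 : Matrix (Fin n) (Fin n) B))
            * (Sm * ((T ⊗ₖ (1 : Matrix (Fin n) (Fin n) B))
                * ((1 : Matrix (Fin n) (Fin n) B) ⊗ₖ T)))
            * ((1 : Matrix (Fin n) (Fin n) B) ⊗ₖ Tinv)
          = (Tinv ⊗ₖ (1 : Matrix (Fin n) (Fin n) B)) * Sm
              * (T ⊗ₖ (1 : Matrix (Fin n) (Fin n) B))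
              * (((1 : Matrix (Fin n) (Fin n) B) ⊗ₖ T)
                  * ((1 : Matrix (Fin n) (Fin n) B) ⊗ₖ Tinv)) := by
            simp only [mul_assoc]
        _ = (Tinv ⊗ₖ (1 : Matrix (Fin n) (Fin n) B)) * Sm
              * (T ⊗ₖ (1 : Matrix (Fin n) (Fin n) B)) := by rw [e1, mul_one]
    have h2 : (Tinv ⊗ₖ (1 : Matrix (Fin n) (Fin n) B))
          * (((T ⊗ₖ (1 : Matrix (Fin n) (Fin n) B))
              * ((1 : Matrix (Fin n) (Fin n) B) ⊗ₖ T)) * Sm)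
          * ((1 : Matrix (Fin n) (Fin n) B) ⊗ₖ Tinv)
        = ((1 : Matrix (Fin n) (Fin n) B) ⊗ₖ T) * Sm
            * ((1 : Matrix (Fin n) (Fin n) B) ⊗ₖ Tinv) := by
      calc (Tinv ⊗ₖ (1 : Matrix (Fin n) (Fin n) B))
            * (((T ⊗ₖ (1 : Matrix (Fin n) (Fin n) B))
                * ((1 : Matrix (Fin n) (Fin n) B) ⊗ₖ T)) * Sm)
            * ((1 : Matrix (Fin n) (Fin n) B) ⊗ₖ Tinv)
          = (Tinv ⊗ₖ (1 : Matrix (Fin n) (Fin n) B)) * (T ⊗ₖ (1 : Matrix (Fin n) (Fin n) B))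
              * (((1 : Matrix (Fin n) (Fin n) B) ⊗ₖ T)
                  * (Sm * ((1 : Matrix (Fin n) (Fin n) B) ⊗ₖ Tinv))) := by
            simp only [mul_assoc]
        _ = ((1 : Matrix (Fin n) (Fin n) B) ⊗ₖ T)
              * (Sm * ((1 : Matrix (Fin n) (Fin n) B) ⊗ₖ Tinv)) := by rw [e2, one_mul]
        _ = ((1 : Matrix (Fin n) (Fin n) B) ⊗ₖ T) * Sm
              * ((1 : Matrix (Fin n) (Fin n) B) ⊗ₖ Tinv) := by rw [mul_assoc]
    rw [← h1, hFRT, h2]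
  have hW : ∀ a b : Fin n,
      (if b = a then
          q • (∑ i : Fin n, qd q i • (Tinv i a * T a i))
            + (q - q⁻¹) • ∑ k : Fin n,
                (if k < a then ∑ i : Fin n, qd q i • (Tinv i k * T k i) else 0)
        else ∑ i : Fin n, qd q i • (Tinv i b * T a i))
      = if a = b then q • (1 : B) else 0 := by
    intro a b
    rw [← weightedL q T Tinv a b, ← weightedR q hq T Tinv hT a b]
    exact Finset.sum_congr rfl fun i _ => by rw [hKey]
  have hOff : ∀ a b : Fin n, b ≠ a →
      (∑ i : Fin n, qd q i • (Tinv i b * T a i)) = 0 := by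
    intro a b hba
    have h := hW a b
    rwa [if_neg hba, if_neg (Ne.symm hba)] at h
  have hDiag : ∀ a : Fin n,
      q • (∑ i : Fin n, qd q i • (Tinv i a * T a i))
        + (q - q⁻¹) • ∑ k : Fin n,
            (if k < a then ∑ i : Fin n, qd q i • (Tinv i k * T k i) else 0)
      = q • (1 : B) := by
    intro a
    have h := hW a a
    rwa [if_pos rfl, if_pos rfl] at h
  have hXdiag : ∀ a : Fin n,
      (∑ i : Fin n, qd q i • (Tinv i a * T a i)) = qd q a • (1 : B) := by
    have key : ∀ m : ℕ, ∀ hm : m < n,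
        (∑ i : Fin n, qd q i • (Tinv i ⟨m, hm⟩ * T ⟨m, hm⟩ i)) = qd q ⟨m, hm⟩ • (1 : B) := by
      intro m
      induction m using Nat.strong_induction_on with
      | _ m ih =>
        intro hm
        have h := hDiag ⟨m, hm⟩
        have hrepl : (∑ k : Fin n,
              (if k < (⟨m, hm⟩ : Fin n) then ∑ i : Fin n, qd q i • (Tinv i k * T k i) else 0))
            = (∑ k : Fin n, (if k < (⟨m, hm⟩ : Fin n) then qd q k else 0)) • (1 : B) := by
          rw [Finset.sum_smul]
          apply Finset.sum_congr rfl
          intro k _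
          by_cases hk : k < (⟨m, hm⟩ : Fin n)
          · rw [if_pos hk, if_pos hk]; exact ih k.val hk k.isLt
          · rw [if_neg hk, if_neg hk, zero_smul]
        rw [hrepl] at h
        have hgeom := geomFin q hq (⟨m, hm⟩ : Fin n)
        have hX : q • (∑ i : Fin n, qd q i • (Tinv i ⟨m, hm⟩ * T ⟨m, hm⟩ i))
            = (q * qd q ⟨m, hm⟩) • (1 : B) := by
          have h2 := eq_sub_of_add_eq h
          rw [h2, smul_smul, ← sub_smul]
          congr 1
          simp only [qd]
          linear_combination -hgeom
        calc (∑ i : Fin n, qd q i • (Tinv i ⟨m, hm⟩ * T ⟨m, hm⟩ i))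
            = q⁻¹ • (q • (∑ i : Fin n, qd q i • (Tinv i ⟨m, hm⟩ * T ⟨m, hm⟩ i))) := by
              rw [smul_smul, inv_mul_cancel₀ hq, one_smul]
          _ = q⁻¹ • ((q * qd q ⟨m, hm⟩) • (1 : B)) := by rw [hX]
          _ = qd q ⟨m, hm⟩ • (1 : B) := by
              rw [smul_smul, ← mul_assoc, inv_mul_cancel₀ hq, one_mul]
    intro a
    exact key a.val a.isLt
  -- final computation
  have hM : ∀ i : Fin n, (Tinv * A.map (algebraMap K B) * T) i i
      = ∑ a : Fin n, ∑ b : Fin n, A a b • (Tinv i a * T b i) := by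
    intro i
    rw [Matrix.mul_apply]
    rw [Finset.sum_congr rfl fun b _ => by rw [Matrix.mul_apply, Finset.sum_mul]]
    rw [Finset.sum_comm]
    apply Finset.sum_congr rfl
    intro a _
    apply Finset.sum_congr rfl
    intro b _
    rw [Matrix.map_apply, mul_assoc, ← Algebra.smul_def, mul_smul_comm]
  have hDmap : (qTraceD K n q).map (algebraMap K B)
      = Matrix.diagonal (fun i => algebraMap K B (qd q i)) := by
    rw [qTraceD, Matrix.diagonal_map (map_zero _)]
    rfl
  rw [hDmap]
  rw [Matrix.trace]
  have hdiag_entry : ∀ i : Fin n,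
      (Matrix.diagonal (fun i => algebraMap K B (qd q i))
        * (Tinv * A.map (algebraMap K B) * T)).diag i
      = qd q i • ((Tinv * A.map (algebraMap K B) * T) i i) := by
    intro i
    rw [Matrix.diag]
    rw [Matrix.diagonal_mul, ← Algebra.smul_def]
  rw [Finset.sum_congr rfl fun i _ => hdiag_entry i]
  rw [Finset.sum_congr rfl fun i _ => by rw [hM i]]
  have swap : (∑ i : Fin n, qd q i • ∑ a : Fin n, ∑ b : Fin n, A a b • (Tinv i a * T b i))
      = ∑ a : Fin n, ∑ b : Fin n, A a b • (∑ i : Fin n, qd q i • (Tinv i a * T b i)) := by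
    simp only [Finset.smul_sum]
    rw [Finset.sum_comm]
    apply Finset.sum_congr rfl
    intro a _
    rw [Finset.sum_comm]
    apply Finset.sum_congr rfl
    intro b _
    apply Finset.sum_congr rfl
    intro i _
    rw [smul_smul, smul_smul, mul_comm]
  rw [swap]
  have collapse : (∑ a : Fin n, ∑ b : Fin n,
        A a b • (∑ i : Fin n, qd q i • (Tinv i a * T b i)))
      = ∑ a : Fin n, (A a a * qd q a) • (1 : B) := by
    apply Finset.sum_congr rfl
    intro a _
    rw [Finset.sum_eq_single a]
    · rw [hXdiag a, smul_smul]
    · intro b _ hb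
      rw [hOff b a (Ne.symm hb), smul_zero]
    · simp
  rw [collapse]
  have htr : Matrix.trace (qTraceD K n q * A) = ∑ a : Fin n, qd q a * A a a := by
    rw [Matrix.trace, qTraceD]
    apply Finset.sum_congr rfl
    intro a _
    rw [Matrix.diag, Matrix.diagonal_mul]
    rfl
  rw [htr, map_sum]
  apply Finset.sum_congr rfl
  intro a _
  rw [Algebra.algebraMap_eq_smul_one, mul_comm]
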